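/- Let Γ = (Γ₀, Γ₁, C) be a colored quiver. The formula (∑_v μ_v x_v)·(∑_c λ_c c) = ∑_r λ_{u(r)} μ_{s(r)} x_{t(r)}, where r ranges over all paths in Γ, gives M_Γ = ∏_{v ∈ Γ₀} K x_v the structure of a right module over the algebra F_Γ of admissible elements. -/

import Mathlib

open scoped BigOperators Classical

/-- The formal monoid algebra `K⟨⟨C⟩⟩` is modeled as functions `FreeMonoid C → K`.
This is its convolution multiplication. -/
noncomputable def fmaMul {K C : Type*} [Field K] (f g : FreeMonoid C → K) :
    FreeMonoid C → K :=
  fun c => ∑ᶠ p : FreeMonoid C × FreeMonoid C,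
    if p.1 * p.2 = c then f p.1 * g p.2 else 0

/-- The identity element of `K⟨⟨C⟩⟩`. -/
noncomputable def fmaOne {K C : Type*} [Field K] : FreeMonoid C → K :=
  fun c => if c = 1 then 1 else 0

/-- The support of an element of `K⟨⟨C⟩⟩`. -/
def fmaSupp {K C : Type*} [Field K] (f : FreeMonoid C → K) : Set (FreeMonoid C) :=
  {c | f c ≠ 0}

/-- A colored quiver `Γ = (Γ₀, Γ₁, C, s, t, u)`. -/
structure ColoredQuiver where
  V : Type
  A : Type
  Cl : Type
  s : A → V
  t : A → V
  u : A → Cl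

/-- Paths in a colored quiver, from a source vertex to a target vertex. -/
inductive CQPath (Γ : ColoredQuiver) : Γ.V → Γ.V → Type
  | nil (v : Γ.V) : CQPath Γ v v
  | cons (r : Γ.A) {w : Γ.V} (p : CQPath Γ (Γ.t r) w) : CQPath Γ (Γ.s r) w

/-- The sequence of colors of a path, as an element of the free monoid on colors. -/
def CQPath.colors {Γ : ColoredQuiver} : ∀ {v w : Γ.V}, CQPath Γ v w → FreeMonoid Γ.Cl
  | _, _, .nil _ => 1
  | _, _, .cons r p => FreeMonoid.of (Γ.u r) * p.colors

/-- Concatenation of paths. -/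
def CQPath.comp {Γ : ColoredQuiver} :
    ∀ {a b c : Γ.V}, CQPath Γ a b → CQPath Γ b c → CQPath Γ a c
  | _, _, _, .nil _, q => q
  | _, _, _, .cons r p, q => .cons r (p.comp q)

/-- `P_v(B)`: the set of paths with target `v` whose color sequence lies in `B`
(paths are recorded together with their source vertex). -/
def pathsTo (Γ : ColoredQuiver) (v : Γ.V) (B : Set (FreeMonoid Γ.Cl)) :
    Set (Σ w : Γ.V, CQPath Γ w v) :=
  {p | p.2.colors ∈ B}

/-- An element of `K⟨⟨C⟩⟩` is admissible if `P_v(supp f)` is finite for every vertex. -/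
def Admissible {K : Type*} [Field K] (Γ : ColoredQuiver) (f : FreeMonoid Γ.Cl → K) : Prop :=
  ∀ v : Γ.V, (pathsTo Γ v (fmaSupp f)).Finite

/-- The action of `f ∈ K⟨⟨C⟩⟩` on `y ∈ M_Γ = ∏_v K x_v`:
`(y·f)(t(r)) = ∑_r λ_{u(r)} μ_{s(r)}`, the sum running over paths `r`
(well defined when `f` is admissible). -/
noncomputable def cqAct {K : Type*} [Field K] {Γ : ColoredQuiver} (y : Γ.V → K)
    (f : FreeMonoid Γ.Cl → K) : Γ.V → K :=
  fun w => ∑ᶠ p : Σ a : Γ.V, CQPath Γ a w, f p.2.colors * y p.1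

/-! ### Auxiliary lemmas -/

section Aux

open Function

lemma my_finsum_sigma {ι : Type*} {π : ι → Type*} {M : Type*} [AddCommMonoid M]
    (f : (Σ i : ι, π i) → M) (hf : (Function.support f).Finite) :
    ∑ᶠ x : Σ i : ι, π i, f x = ∑ᶠ i : ι, ∑ᶠ j : π i, f ⟨i, j⟩ := by
  classical
  set T := hf.toFinset with hT
  set I := T.image Sigma.fst with hI
  set t : ∀ i : ι, Finset (π i) := fun i => T.preimage (Sigma.mk i) (sigma_mk_injective.injOn) with ht
  have hmemT : ∀ x : Σ i, π i, f x ≠ 0 → x ∈ T := fun x hx => hf.mem_toFinset.2 hx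
  have h1 : ∑ᶠ x : Σ i, π i, f x = ∑ x ∈ I.sigma t, f x := by
    apply finsum_eq_sum_of_support_subset
    intro x hx
    have hxT := hmemT x hx
    simp only [Finset.coe_sigma, Set.mem_sigma_iff]
    constructor
    · exact Finset.mem_image.2 ⟨x, hxT, rfl⟩
    · simp only [ht, Finset.mem_coe, Finset.mem_preimage]; exact hxT
  rw [h1, Finset.sum_sigma]
  have h2 : ∀ i : ι, ∑ᶠ j : π i, f ⟨i, j⟩ = ∑ j ∈ t i, f ⟨i, j⟩ := by
    intro i
    apply finsum_eq_sum_of_support_subset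
    intro j hj
    simp only [ht, Finset.mem_coe, Finset.mem_preimage]
    exact hmemT _ hj
  have h3 : ∑ᶠ i : ι, ∑ᶠ j : π i, f ⟨i, j⟩ = ∑ i ∈ I, ∑ᶠ j : π i, f ⟨i, j⟩ := by
    apply finsum_eq_sum_of_support_subset
    intro i hi
    rw [mem_support] at hi
    by_contra hI'
    apply hi
    apply finsum_eq_zero_of_forall_eq_zero
    intro j
    by_contra hj
    exact hI' (Finset.mem_image.2 ⟨⟨i, j⟩, hmemT _ hj, rfl⟩)
  rw [h3]
  exact Finset.sum_congr rfl fun i _ => (h2 i).symm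

/-- The set of two-factor factorizations of a word is finite. -/
lemma fac_finite {C : Type*} (c : FreeMonoid C) :
    {q : FreeMonoid C × FreeMonoid C | q.1 * q.2 = c}.Finite := by
  apply Set.Finite.subset (Set.finite_range
    (fun k : Fin (c.toList.length + 1) =>
      (FreeMonoid.ofList (c.toList.take k), FreeMonoid.ofList (c.toList.drop k))))
  rintro ⟨q1, q2⟩ hq
  simp only [Set.mem_setOf_eq] at hq
  have hlist : q1.toList ++ q2.toList = c.toList := by
    rw [← hq]; simp
  have hlen : q1.toList.length ≤ c.toList.length := by
    rw [← hlist]; simp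
  refine ⟨⟨q1.toList.length, Nat.lt_succ_of_le hlen⟩, ?_⟩
  simp only [← hlist, List.take_left, List.drop_left]
  exact Prod.ext (FreeMonoid.toList.injective rfl) (FreeMonoid.toList.injective rfl)

variable {Γ : ColoredQuiver}

lemma CQPath.comp_colors : ∀ {a b c : Γ.V} (p : CQPath Γ a b) (q : CQPath Γ b c),
    (p.comp q).colors = p.colors * q.colors
  | _, _, _, .nil _, q => by simp [CQPath.comp, CQPath.colors]
  | _, _, _, .cons r p, q => by
      simp [CQPath.comp, CQPath.colors, CQPath.comp_colors p q, mul_assoc]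

/-- Split a path at a given prefix word (given as a list of colors). -/
def CQPath.splitL : ∀ {a w : Γ.V}, CQPath Γ a w → List Γ.Cl → Σ b : Γ.V, CQPath Γ a b × CQPath Γ b w
  | _, _, p, [] => ⟨_, (.nil _, p)⟩
  | _, _, .nil v, _ :: _ => ⟨v, (.nil v, .nil v)⟩
  | _, _, .cons r p, _ :: l => let s := p.splitL l; ⟨s.1, (.cons r s.2.1, s.2.2)⟩

lemma CQPath.splitL_comp : ∀ {a b w : Γ.V} (p : CQPath Γ a b) (q : CQPath Γ b w),
    (p.comp q).splitL p.colors.toList = ⟨b, (p, q)⟩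
  | _, _, _, .nil _, q => by simp [CQPath.comp, CQPath.colors, CQPath.splitL]
  | _, _, _, .cons r p, q => by
      have ih := CQPath.splitL_comp p q
      simp only [CQPath.comp, CQPath.colors, CQPath.splitL]
      rw [show FreeMonoid.toList (FreeMonoid.of (Γ.u r) * p.colors) = Γ.u r :: FreeMonoid.toList p.colors from rfl]
      simp only [CQPath.splitL, ih]
      rw [ih]

lemma CQPath.colors_eq_one {w a : Γ.V} (p : CQPath Γ a w) (h : p.colors = 1) :
    (⟨a, p⟩ : Σ v : Γ.V, CQPath Γ v w) = ⟨w, .nil w⟩ := by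
  cases p with
  | nil v => rfl
  | cons r p =>
      exfalso
      have := congrArg FreeMonoid.toList h
      simp [CQPath.colors] at this

lemma CQPath.split_spec : ∀ {a w : Γ.V} (p : CQPath Γ a w) (c₁ c₂ : FreeMonoid Γ.Cl),
    c₁ * c₂ = p.colors →
    ∃ (b : Γ.V) (p₁ : CQPath Γ a b) (p₂ : CQPath Γ b w),
      p₁.comp p₂ = p ∧ p₁.colors = c₁ ∧ p₂.colors = c₂ := by
  intro a w p
  induction p with
  | nil v =>
      intro c₁ c₂ h
      have h' := congrArg FreeMonoid.toList h
      simp [CQPath.colors] at h'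
      refine ⟨v, .nil v, .nil v, rfl, ?_, ?_⟩ <;>
        apply FreeMonoid.toList.injective <;> simp [CQPath.colors, h'.1, h'.2]
  | cons r p ih =>
      intro c₁ c₂ h
      rcases hl : c₁.toList with _ | ⟨x, l⟩
      · have hc₁ : c₁ = 1 := FreeMonoid.toList.injective (by simp [hl])
        exact ⟨_, .nil _, .cons r p, rfl, hc₁.symm, by rw [hc₁, one_mul] at h; exact h.symm⟩
      · have h' := congrArg FreeMonoid.toList h
        simp [CQPath.colors, hl] at h'
        obtain ⟨hx, hrest⟩ := h'
        have hfac : (FreeMonoid.ofList l) * c₂ = p.colors :=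
          FreeMonoid.toList.injective (by simpa using hrest)
        obtain ⟨b, p₁, p₂, hcomp, hc1, hc2⟩ := ih _ _ hfac
        refine ⟨b, .cons r p₁, p₂, by simp [CQPath.comp, hcomp], ?_, hc2⟩
        apply FreeMonoid.toList.injective
        simp [CQPath.colors, hc1, hl, hx]

/-- The index type of pairs of composable paths ending at `w`. -/
abbrev AssocD (Γ : ColoredQuiver) (w : Γ.V) :=
  Σ q : Σ b : Γ.V, CQPath Γ b w, Σ a : Γ.V, CQPath Γ a q.1

/-- A composable pair yields a path to `w` with a factorization of its color word. -/
def assocPhi {Γ : ColoredQuiver} {w : Γ.V} (d : AssocD Γ w) :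
    (Σ a : Γ.V, CQPath Γ a w) × (FreeMonoid Γ.Cl × FreeMonoid Γ.Cl) :=
  (⟨d.2.1, d.2.2.comp d.1.2⟩, (d.2.2.colors, d.1.2.colors))

lemma assocPhi_injective {Γ : ColoredQuiver} {w : Γ.V} :
    Function.Injective (assocPhi (Γ := Γ) (w := w)) := by
  have hli : Function.LeftInverse
      (fun e : (Σ a : Γ.V, CQPath Γ a w) × (FreeMonoid Γ.Cl × FreeMonoid Γ.Cl) =>
        (⟨⟨(e.1.2.splitL e.2.1.toList).1, (e.1.2.splitL e.2.1.toList).2.2⟩,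
          ⟨e.1.1, (e.1.2.splitL e.2.1.toList).2.1⟩⟩ : AssocD Γ w))
      assocPhi := by
    rintro ⟨⟨b, p₂⟩, ⟨a, p₁⟩⟩
    simp only [assocPhi]
    rw [CQPath.splitL_comp p₁ p₂]
  exact hli.injective

lemma support_mul_subset {K : Type*} [Field K] {Γ : ColoredQuiver}
    (f : FreeMonoid Γ.Cl → K) (y : Γ.V → K) (w : Γ.V) :
    Function.support (fun p : Σ a : Γ.V, CQPath Γ a w => f p.2.colors * y p.1) ⊆
      pathsTo Γ w (fmaSupp f) :=
  fun _ hp => left_ne_zero_of_mul hp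

end Aux

/-- the formula `(∑_v μ_v x_v)·(∑_c λ_c c) = ∑_r λ_{u(r)} μ_{s(r)} x_{t(r)}`
gives `M_Γ = ∏_v K x_v` the structure of a right module over the algebra `F_Γ` of
admissible elements. -/
theorem cqAct_module_structure (K : Type*) [Field K] (Γ : ColoredQuiver) :
    (∀ y : Γ.V → K, cqAct y (fmaOne : FreeMonoid Γ.Cl → K) = y) ∧
    (∀ (y : Γ.V → K) (f g : FreeMonoid Γ.Cl → K), Admissible Γ f → Admissible Γ g →
      cqAct y (fmaMul f g) = cqAct (cqAct y f) g) ∧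
    (∀ (y z : Γ.V → K) (f : FreeMonoid Γ.Cl → K), Admissible Γ f →
      cqAct (y + z) f = cqAct y f + cqAct z f) ∧
    (∀ (y : Γ.V → K) (f g : FreeMonoid Γ.Cl → K), Admissible Γ f → Admissible Γ g →
      cqAct y (f + g) = cqAct y f + cqAct y g) ∧
    (∀ (a : K) (y : Γ.V → K) (f : FreeMonoid Γ.Cl → K), Admissible Γ f →
      cqAct (a • y) f = a • cqAct y f ∧ cqAct y (a • f) = a • cqAct y f) := by
  refine ⟨?_, ?_, ?_, ?_, ?_⟩
  · -- identity
    intro y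
    funext w
    show (∑ᶠ p : Σ a : Γ.V, CQPath Γ a w, fmaOne p.2.colors * y p.1) = y w
    rw [finsum_eq_single _ (⟨w, CQPath.nil w⟩ : Σ a : Γ.V, CQPath Γ a w)]
    · show fmaOne (CQPath.nil w).colors * y w = y w
      simp [fmaOne, CQPath.colors]
    · intro x hx
      by_cases hc : x.2.colors = 1
      · exact absurd (CQPath.colors_eq_one x.2 hc) hx
      · show fmaOne x.2.colors * y x.1 = 0
        simp [fmaOne, hc]
  · -- associativity
    intro y f g hf hg
    funext w
    set F : ((Σ a : Γ.V, CQPath Γ a w) × (FreeMonoid Γ.Cl × FreeMonoid Γ.Cl)) → K :=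
      fun e => if e.2.1 * e.2.2 = e.1.2.colors then f e.2.1 * g e.2.2 * y e.1.1 else 0 with hFdef
    set S : Set (AssocD Γ w) :=
      {d | d.1 ∈ pathsTo Γ w (fmaSupp g) ∧ d.2 ∈ pathsTo Γ d.1.1 (fmaSupp f)} with hSdef
    have hS : S.Finite := by
      apply Set.Finite.subset
        ((hg w).biUnion (fun x _ => ((hf x.1).image (fun p₁ => (⟨x, p₁⟩ : AssocD Γ w)))))
      intro d hd
      exact Set.mem_biUnion hd.1 ⟨d.2, hd.2, rfl⟩
    have hFsupp : Function.support F ⊆ assocPhi '' S := by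
      intro e he
      rw [Function.mem_support, hFdef] at he
      dsimp only at he
      split_ifs at he with hcond
      · have hf0 : f e.2.1 ≠ 0 := left_ne_zero_of_mul (left_ne_zero_of_mul he)
        have hg0 : g e.2.2 ≠ 0 := right_ne_zero_of_mul (left_ne_zero_of_mul he)
        obtain ⟨b, p₁, p₂, hcomp, hc1, hc2⟩ := CQPath.split_spec e.1.2 e.2.1 e.2.2 hcond
        refine ⟨⟨⟨b, p₂⟩, ⟨e.1.1, p₁⟩⟩, ⟨?_, ?_⟩, ?_⟩
        · show p₂.colors ∈ fmaSupp g
          rw [hc2]; exact hg0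
        · show p₁.colors ∈ fmaSupp f
          rw [hc1]; exact hf0
        · show (⟨e.1.1, p₁.comp p₂⟩, (p₁.colors, p₂.colors)) = e
          rw [hcomp, hc1, hc2]
      · exact absurd rfl he
    have hF : (Function.support F).Finite := (hS.image _).subset hFsupp
    calc cqAct y (fmaMul f g) w
        = ∑ᶠ p : Σ a : Γ.V, CQPath Γ a w, fmaMul f g p.2.colors * y p.1 := rfl
      _ = ∑ᶠ p : Σ a : Γ.V, CQPath Γ a w, ∑ᶠ q : FreeMonoid Γ.Cl × FreeMonoid Γ.Cl,
            F (p, q) := by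
          refine finsum_congr fun p => ?_
          rw [fmaMul, finsum_mul _ _]
          · refine finsum_congr fun q => ?_
            rw [hFdef]
            simp only
            rw [ite_mul, zero_mul]
      _ = ∑ᶠ e, F e := (finsum_curry F hF).symm
      _ = ∑ᶠ e ∈ Set.range (assocPhi (Γ := Γ) (w := w)), F e := by
          rw [← finsum_mem_univ F]
          exact (finsum_mem_inter_support_eq' F _ _ fun x hx =>
            by simp [Set.image_subset_range _ _ (hFsupp hx)]).symm
      _ = ∑ᶠ d : AssocD Γ w, F (assocPhi d) := finsum_mem_range assocPhi_injective
      _ = ∑ᶠ d : AssocD Γ w, g d.1.2.colors * (f d.2.2.colors * y d.2.1) := by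
          refine finsum_congr fun d => ?_
          rw [hFdef]
          simp only [assocPhi]
          refine (if_pos ((CQPath.comp_colors d.2.2 d.1.2).symm :
            d.2.2.colors * d.1.2.colors = (d.2.2.comp d.1.2).colors)).trans ?_
          ring
      _ = ∑ᶠ q : Σ b : Γ.V, CQPath Γ b w, ∑ᶠ p : Σ a : Γ.V, CQPath Γ a q.1,
            g q.2.colors * (f p.2.colors * y p.1) := by
          apply my_finsum_sigma
          apply hS.subset
          intro d hd
          rw [Function.mem_support] at hd
          refine ⟨?_, ?_⟩
          · exact left_ne_zero_of_mul hd
          · exact left_ne_zero_of_mul (right_ne_zero_of_mul hd)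
      _ = ∑ᶠ q : Σ b : Γ.V, CQPath Γ b w, g q.2.colors * cqAct y f q.1 := by
          refine finsum_congr fun q => ?_
          exact (mul_finsum _ _).symm
      _ = cqAct (cqAct y f) g w := rfl
  · -- additivity in y
    intro y z f hf
    funext w
    show (∑ᶠ p : Σ a : Γ.V, CQPath Γ a w, f p.2.colors * (y + z) p.1)
        = (∑ᶠ p : Σ a : Γ.V, CQPath Γ a w, f p.2.colors * y p.1)
          + ∑ᶠ p : Σ a : Γ.V, CQPath Γ a w, f p.2.colors * z p.1
    rw [← finsum_add_distrib ((hf w).subset (support_mul_subset f y w))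
      ((hf w).subset (support_mul_subset f z w))]
    exact finsum_congr fun p => by simp [mul_add]
  · -- additivity in f
    intro y f g hf hg
    funext w
    show (∑ᶠ p : Σ a : Γ.V, CQPath Γ a w, (f + g) p.2.colors * y p.1)
        = (∑ᶠ p : Σ a : Γ.V, CQPath Γ a w, f p.2.colors * y p.1)
          + ∑ᶠ p : Σ a : Γ.V, CQPath Γ a w, g p.2.colors * y p.1
    rw [← finsum_add_distrib ((hf w).subset (support_mul_subset f y w))
      ((hg w).subset (support_mul_subset g y w))]
    exact finsum_congr fun p => by simp [add_mul]
  · -- scalars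
    intro a y f hf
    constructor
    · funext w
      show (∑ᶠ p : Σ a' : Γ.V, CQPath Γ a' w, f p.2.colors * (a • y) p.1)
          = a • ∑ᶠ p : Σ a' : Γ.V, CQPath Γ a' w, f p.2.colors * y p.1
      rw [smul_eq_mul, mul_finsum _ _]
      exact finsum_congr fun p => by simp [Pi.smul_apply, smul_eq_mul]; ring
    · funext w
      show (∑ᶠ p : Σ a' : Γ.V, CQPath Γ a' w, (a • f) p.2.colors * y p.1)
          = a • ∑ᶠ p : Σ a' : Γ.V, CQPath Γ a' w, f p.2.colors * y p.1
      rw [smul_eq_mul, mul_finsum _ _]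
      exact finsum_congr fun p => by simp [Pi.smul_apply, smul_eq_mul]; ring
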